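/- arXiv:2310.08919 — 8 statements merged into one kernel-verified Lean document; each statement's English description precedes it below -/
import Mathlib

section
/- Fix two distinct points Q and Q' in the Euclidean plane ℝ², a vector v that is linearly independent from Q' − Q, and a real number ν > 0. Every point P of the plane can be written uniquely as P = Q + s·(Q' − Q) + t·v with s, t ∈ ℝ; set V = Q + s·(Q' − Q). Then the locus L = {P ∈ ℝ² : t²·‖v‖² = ν·s·(s − 1)·‖Q' − Q‖²} (which encodes Budden's relation PV² = ν·VQ·VQ' with signed lengths along the line QQ') is the image of the standard hyperbola {(x, y) ∈ ℝ² : x² − y² = 1} under an invertible affine transformation of ℝ². -/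
private noncomputable def buddenLin (u w : EuclideanSpace ℝ (Fin 2)) (c : ℝ) :
    EuclideanSpace ℝ (Fin 2) →ₗ[ℝ] EuclideanSpace ℝ (Fin 2) where
  toFun p := (p 0 / 2) • u + (c * p 1) • w
  map_add' p q := by
    simp only [PiLp.add_apply]
    match_scalars <;> ring
  map_smul' r p := by
    simp only [PiLp.smul_apply, smul_eq_mul, RingHom.id_apply]
    match_scalars <;> ring

private theorem buddenLin_apply (u w : EuclideanSpace ℝ (Fin 2)) (c : ℝ)
    (p : EuclideanSpace ℝ (Fin 2)) :
    buddenLin u w c p = (p 0 / 2) • u + (c * p 1) • w := rfl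

/-- **Budden's relation, hyperbola case.**
Fix distinct points `Q, Q'` in the Euclidean plane, a vector `v` linearly independent
from `Q' - Q`, and `ν > 0`.  The locus of points `P = Q + s • (Q' - Q) + t • v` with
`t² ‖v‖² = ν s (s - 1) ‖Q' - Q‖²` (Budden's relation `PV² = ν · VQ · VQ'` in signed
lengths) is the image of the standard hyperbola `x² - y² = 1` under an invertible
affine transformation of the plane. -/
theorem budden_locus_is_hyperbola
    (Q Q' v : EuclideanSpace ℝ (Fin 2)) (hQQ' : Q ≠ Q')
    (hindep : LinearIndependent ℝ ![Q' - Q, v])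
    (ν : ℝ) (hν : 0 < ν)
    (L : Set (EuclideanSpace ℝ (Fin 2)))
    (hL : L = {P : EuclideanSpace ℝ (Fin 2) | ∃ s t : ℝ,
      P = Q + s • (Q' - Q) + t • v ∧
      t ^ 2 * ‖v‖ ^ 2 = ν * s * (s - 1) * ‖Q' - Q‖ ^ 2}) :
    ∃ A : EuclideanSpace ℝ (Fin 2) ≃ᵃ[ℝ] EuclideanSpace ℝ (Fin 2),
      L = A '' {p : EuclideanSpace ℝ (Fin 2) | (p 0) ^ 2 - (p 1) ^ 2 = 1} := by
  subst hL
  have hu : Q' - Q ≠ 0 := sub_ne_zero.mpr hQQ'.symm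
  have hv : v ≠ 0 := by
    have := hindep.ne_zero 1
    simpa using this
  have ha : (0:ℝ) < ‖Q' - Q‖ := norm_pos_iff.mpr hu
  have hb : (0:ℝ) < ‖v‖ := norm_pos_iff.mpr hv
  set a := ‖Q' - Q‖ with ha_def
  set b := ‖v‖ with hb_def
  set c : ℝ := a * Real.sqrt ν / (2 * b) with hc_def
  have hsν : Real.sqrt ν ^ 2 = ν := Real.sq_sqrt hν.le
  have hc : c ≠ 0 := by
    have : 0 < c := by
      have := Real.sqrt_pos.mpr hν
      positivity
    exact this.ne'
  have hc2 : c ^ 2 = ν * a ^ 2 / (4 * b ^ 2) := by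
    rw [hc_def, div_pow, mul_pow, hsν, mul_pow]
    ring
  -- the linear part
  set f := buddenLin (Q' - Q) v c with hf_def
  have hinj : Function.Injective f := by
    rw [injective_iff_map_eq_zero]
    intro p hp
    rw [buddenLin_apply] at hp
    obtain ⟨h0, h1⟩ := LinearIndependent.pair_iff.mp hindep _ _ hp
    have hp0 : p 0 = 0 := by linarith
    have hp1 : p 1 = 0 := by
      rcases mul_eq_zero.mp h1 with h | h
      · exact absurd h hc
      · exact h
    ext i
    fin_cases i <;> simp [hp0, hp1]
  have hbij : Function.Bijective f :=
    ⟨hinj, (LinearMap.injective_iff_surjective).mp hinj⟩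
  set e := LinearEquiv.ofBijective f hbij with he_def
  set P0 : EuclideanSpace ℝ (Fin 2) := Q + (2⁻¹ : ℝ) • (Q' - Q) with hP0_def
  refine ⟨(e.toAffineEquiv).trans (AffineEquiv.constVAdd ℝ _ P0), ?_⟩
  have hA : ∀ p : EuclideanSpace ℝ (Fin 2),
      (e.toAffineEquiv).trans (AffineEquiv.constVAdd ℝ _ P0) p
        = Q + (2⁻¹ : ℝ) • (Q' - Q) + ((p 0 / 2) • (Q' - Q) + (c * p 1) • v) := by
    intro p
    simp only [AffineEquiv.trans_apply, AffineEquiv.constVAdd_apply, vadd_eq_add,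
      LinearEquiv.coe_toAffineEquiv, he_def, LinearEquiv.ofBijective_apply, hf_def,
      buddenLin_apply, hP0_def]
  ext P
  simp only [Set.mem_setOf_eq, Set.mem_image]
  constructor
  · rintro ⟨s, t, rfl, hrel⟩
    refine ⟨(WithLp.equiv 2 (Fin 2 → ℝ)).symm ![2 * s - 1, t / c], ?_, ?_⟩
    · have ht2 : t ^ 2 = ν * s * (s - 1) * a ^ 2 / b ^ 2 := by
        field_simp at hrel ⊢
        linarith [hrel]
      have key : (t / c) ^ 2 = 4 * s * (s - 1) := by
        rw [div_pow, ht2, hc2]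
        field_simp
      simp only [Set.mem_setOf_eq, WithLp.equiv_symm_apply, PiLp.toLp_apply, Matrix.cons_val_zero,
        Matrix.cons_val_one, Matrix.head_cons]
      rw [key]; ring
    · rw [hA]
      simp only [WithLp.equiv_symm_apply, PiLp.toLp_apply, Matrix.cons_val_zero, Matrix.cons_val_one,
        Matrix.head_cons]
      have hct : c * (t / c) = t := by field_simp
      rw [hct]
      match_scalars <;> ring
  · rintro ⟨p, hp, rfl⟩
    have hp' : (p 0) ^ 2 - (p 1) ^ 2 = 1 := hp
    refine ⟨(p 0 + 1) / 2, c * p 1, ?_, ?_⟩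
    · rw [hA]
      match_scalars <;> ring
    · have h1 : (p 1) ^ 2 = (p 0) ^ 2 - 1 := by linarith [hp']
      rw [mul_pow, hc2, h1]
      field_simp
      ring
end

section
/- Fix two distinct points Q and Q' in the Euclidean plane ℝ², a vector v that is linearly independent from Q' − Q, and a real number ν < 0. Every point P of the plane can be written uniquely as P = Q + s·(Q' − Q) + t·v with s, t ∈ ℝ. Then the locus L = {P ∈ ℝ² : t²·‖v‖² = ν·s·(s − 1)·‖Q' − Q‖²} is the image of the unit circle {(x, y) ∈ ℝ² : x² + y² = 1} under an invertible affine transformation of ℝ². -/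
/-- **Budden's relation, ellipse case.**
Fix distinct points `Q, Q'` in the Euclidean plane, a vector `v` linearly independent
from `Q' - Q`, and `ν < 0`.  The locus of points `P = Q + s • (Q' - Q) + t • v` with
`t² ‖v‖² = ν s (s - 1) ‖Q' - Q‖²` is the image of the unit circle `x² + y² = 1`
under an invertible affine transformation of the plane. -/
theorem budden_locus_is_ellipse
    (Q Q' v : EuclideanSpace ℝ (Fin 2)) (hQQ' : Q ≠ Q')
    (hindep : LinearIndependent ℝ ![Q' - Q, v])
    (ν : ℝ) (hν : ν < 0)
    (L : Set (EuclideanSpace ℝ (Fin 2)))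
    (hL : L = {P : EuclideanSpace ℝ (Fin 2) | ∃ s t : ℝ,
      P = Q + s • (Q' - Q) + t • v ∧
      t ^ 2 * ‖v‖ ^ 2 = ν * s * (s - 1) * ‖Q' - Q‖ ^ 2}) :
    ∃ A : EuclideanSpace ℝ (Fin 2) ≃ᵃ[ℝ] EuclideanSpace ℝ (Fin 2),
      L = A '' {p : EuclideanSpace ℝ (Fin 2) | (p 0) ^ 2 + (p 1) ^ 2 = 1} := by
  set d : EuclideanSpace ℝ (Fin 2) := Q' - Q with hd
  have hpair := LinearIndependent.pair_iff.1 hindep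
  have hdne : d ≠ 0 := by
    intro h
    exact absurd ((hpair 1 0 (by simp [h])).1) one_ne_zero
  have hvne : v ≠ 0 := by
    intro h
    exact absurd ((hpair 0 1 (by simp [h])).2) one_ne_zero
  have hdnorm : (0:ℝ) < ‖d‖ := norm_pos_iff.2 hdne
  have hvnorm : (0:ℝ) < ‖v‖ := norm_pos_iff.2 hvne
  set c : ℝ := Real.sqrt (-ν) * ‖d‖ / (2 * ‖v‖) with hc
  have hcpos : 0 < c := by
    apply div_pos (mul_pos (Real.sqrt_pos.2 (by linarith)) hdnorm) (by linarith)
  have hcsq : c ^ 2 * (4 * ‖v‖ ^ 2) = (-ν) * ‖d‖ ^ 2 := by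
    have hs : Real.sqrt (-ν) ^ 2 = -ν := Real.sq_sqrt (by linarith)
    rw [hc, div_pow, mul_pow, hs, mul_pow, div_mul_eq_mul_div,
      div_eq_iff (by positivity)]
    ring
  have hcne : c ≠ 0 := ne_of_gt hcpos
  -- the linear map
  let f : EuclideanSpace ℝ (Fin 2) →ₗ[ℝ] EuclideanSpace ℝ (Fin 2) :=
    { toFun := fun p => (p 0 / 2) • d + (c * p 1) • v
      map_add' := by
        intro p q
        show ((p + q) 0 / 2) • d + (c * (p + q) 1) • v = _
        simp only [PiLp.add_apply]
        module
      map_smul' := by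
        intro r p
        show ((r • p) 0 / 2) • d + (c * (r • p) 1) • v = _
        simp only [PiLp.smul_apply, smul_eq_mul]
        show _ = r • ((p 0 / 2) • d + (c * p 1) • v)
        module }
  have hf : Function.Injective f := by
    rw [← LinearMap.ker_eq_bot, LinearMap.ker_eq_bot']
    intro p hp
    have : (p 0 / 2) • d + (c * p 1) • v = 0 := hp
    obtain ⟨h1, h2⟩ := hpair _ _ this
    ext i
    fin_cases i
    · have : p 0 = 0 := by linarith [h1]
      simpa using this
    · have : p 1 = 0 := by
        rcases mul_eq_zero.1 h2 with h | h
        · exact absurd h hcne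
        · exact h
      simpa using this
  let e : EuclideanSpace ℝ (Fin 2) ≃ₗ[ℝ] EuclideanSpace ℝ (Fin 2) :=
    LinearMap.linearEquivOfInjective f hf rfl
  set q : EuclideanSpace ℝ (Fin 2) := Q + (1/2 : ℝ) • d with hq
  refine ⟨(e.toAffineEquiv).trans (AffineEquiv.constVAdd ℝ _ q), ?_⟩
  have hA : ∀ p, ((e.toAffineEquiv).trans (AffineEquiv.constVAdd ℝ _ q)) p
      = q + ((p 0 / 2) • d + (c * p 1) • v) := by
    intro p
    show q +ᵥ e p = _
    have : e p = f p := rfl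
    rw [this]
    rfl
  ext P
  simp only [hL, Set.mem_setOf_eq, Set.mem_image]
  constructor
  · rintro ⟨s, t, hP, hrel⟩
    refine ⟨(WithLp.equiv 2 _).symm ![2*s-1, t/c], ?_, ?_⟩
    · show (2*s-1)^2 + (t/c)^2 = 1
      have h3 : ‖v‖ ^ 2 ≠ 0 := by positivity
      have ht2 : t ^ 2 * ‖v‖ ^ 2 = (c ^ 2 * (4 * s * (1 - s))) * ‖v‖ ^ 2 := by
        linear_combination hrel + (-(s * (1 - s))) * hcsq
      have ht2' : t ^ 2 = c ^ 2 * (4 * s * (1 - s)) := mul_right_cancel₀ h3 ht2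
      rw [div_pow, ht2', mul_comm (c ^ 2), mul_div_assoc,
        div_self (pow_ne_zero 2 hcne), mul_one]
      ring
    · rw [hA]
      have e0 : ((WithLp.equiv 2 (Fin 2 → ℝ)).symm ![2*s-1, t/c]) 0 = 2*s-1 := rfl
      have e1 : ((WithLp.equiv 2 (Fin 2 → ℝ)).symm ![2*s-1, t/c]) 1 = t/c := rfl
      rw [e0, e1, hP, hq]
      have : c * (t / c) = t := by field_simp
      rw [this]
      module
  · rintro ⟨p, hp, hPp⟩
    refine ⟨(p 0 + 1) / 2, c * p 1, ?_, ?_⟩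
    · rw [← hPp, hA, hq]
      module
    · have hp' : (p 0) ^ 2 + (p 1) ^ 2 = 1 := hp
      rw [mul_pow]
      linear_combination (p 1 ^ 2 / 4) * hcsq + (-(ν * ‖d‖ ^ 2) / 4) * hp'
end

section
/- Let T : ℝ² → ℝ² be an invertible linear map, let E = T''{(x,y) : x² + y² = 1} be the ellipse that is the image of the unit circle under T, and set Q = T(1,0), R = T(0,1), Q' = −Q (so OQ and OR are conjugate semi-diameters of E, where O is the origin). For every point P ∈ E there is a unique point V on the line ℝ·Q such that P − V is a scalar multiple of R, and this V satisfies ‖P − V‖² = (‖R‖² / ‖Q‖²) · ‖V − Q‖ · ‖V − Q'‖. -/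
/-- **Budden's relation for conjugate semi-diameters of an ellipse.**
Let `E` be the image of the unit circle under an invertible linear map `T`,
`Q = T (1,0)`, `R = T (0,1)`, `Q' = -Q` (a pair of conjugate semi-diameters).
For every `P ∈ E` there is a unique `V` on the line `ℝ • Q` with `P - V` a multiple
of `R`, and any such `V` satisfies `‖P - V‖² = (‖R‖²/‖Q‖²) · ‖V - Q‖ · ‖V - Q'‖`. -/
theorem ellipse_conjugate_diameter_relation
    (T : EuclideanSpace ℝ (Fin 2) ≃ₗ[ℝ] EuclideanSpace ℝ (Fin 2))
    (E : Set (EuclideanSpace ℝ (Fin 2)))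
    (hE : E = T '' {p : EuclideanSpace ℝ (Fin 2) | (p 0) ^ 2 + (p 1) ^ 2 = 1})
    (Q R Q' : EuclideanSpace ℝ (Fin 2))
    (hQ : Q = T (EuclideanSpace.single (0 : Fin 2) (1 : ℝ))) (hR : R = T (EuclideanSpace.single (1 : Fin 2) (1 : ℝ))) (hQ' : Q' = -Q) :
    ∀ P ∈ E,
      (∃! V : EuclideanSpace ℝ (Fin 2),
        (∃ a : ℝ, V = a • Q) ∧ (∃ b : ℝ, P - V = b • R)) ∧
      ∀ V : EuclideanSpace ℝ (Fin 2),
        ((∃ a : ℝ, V = a • Q) ∧ (∃ b : ℝ, P - V = b • R)) →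
          ‖P - V‖ ^ 2 = ‖R‖ ^ 2 / ‖Q‖ ^ 2 * (‖V - Q‖ * ‖V - Q'‖) := by
  intro P hP
  rw [hE] at hP
  obtain ⟨p, hp, rfl⟩ := hP
  simp only [Set.mem_setOf_eq] at hp
  set e0 : EuclideanSpace ℝ (Fin 2) := EuclideanSpace.single (0 : Fin 2) (1 : ℝ) with he0
  set e1 : EuclideanSpace ℝ (Fin 2) := EuclideanSpace.single (1 : Fin 2) (1 : ℝ) with he1
  have hpdecomp : p = p 0 • e0 + p 1 • e1 := by
    ext i
    fin_cases i <;>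
      simp [he0, he1, EuclideanSpace.single_apply]
  have hTp : T p = p 0 • Q + p 1 • R := by
    rw [hQ, hR]
    conv_lhs => rw [hpdecomp]
    simp [map_add, map_smul]
  -- Q ≠ 0
  have hQne : ‖Q‖ ≠ 0 := by
    rw [hQ, norm_ne_zero_iff, LinearEquiv.map_ne_zero_iff]
    intro h
    have h2 := congrArg (· 0) h
    rw [he0] at h2
    simp [EuclideanSpace.single_apply] at h2
  -- characterization of V
  have hchar : ∀ V : EuclideanSpace ℝ (Fin 2),
      ((∃ a : ℝ, V = a • Q) ∧ (∃ b : ℝ, T p - V = b • R)) →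
      V = p 0 • Q ∧ T p - V = p 1 • R := by
    rintro V ⟨⟨a, rfl⟩, ⟨b, hb⟩⟩
    have h1 : p - a • e0 = b • e1 := by
      have h2 := congrArg T.symm hb
      rw [hQ, hR] at h2
      simpa [map_sub, map_smul] using h2
    have h0 := congrArg (· 0) h1
    have h1' := congrArg (· 1) h1
    simp [he0, he1, EuclideanSpace.single_apply, sub_eq_zero] at h0 h1'
    -- h0 : p 0 - a = 0 or similar; h1' : p 1 = b
    constructor
    · rw [show a = p 0 by linarith [h0]]
    · rw [hb, show b = p 1 by linarith [h1']]
  refine ⟨⟨p 0 • Q, ⟨⟨p 0, rfl⟩, ⟨p 1, by rw [hTp]; abel⟩⟩, fun V hV => (hchar V hV).1⟩, ?_⟩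
  intro V hV
  obtain ⟨hV1, hV2⟩ := hchar V hV
  rw [hV2, hV1, hQ']
  have hVQ : p 0 • Q - Q = (p 0 - 1) • Q := by rw [sub_smul, one_smul]
  have hVQ' : p 0 • Q - -Q = (p 0 + 1) • Q := by rw [sub_neg_eq_add, add_smul, one_smul]
  rw [hVQ, hVQ', norm_smul, norm_smul, norm_smul]
  have key : |p 0 - 1| * |p 0 + 1| = (p 1) ^ 2 := by
    rw [← abs_mul]
    have h : (p 0 - 1) * (p 0 + 1) = -(p 1) ^ 2 := by nlinarith
    rw [h, abs_neg, abs_of_nonneg (sq_nonneg _)]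
  have hQ2 : ‖Q‖ ^ 2 ≠ 0 := pow_ne_zero _ hQne
  field_simp
  simp only [Real.norm_eq_abs]
  rw [sq_abs]
  linear_combination -(‖R‖ ^ 2) * key
end

section
/- Let A₁, A₂, A₃, A₄, A₅, A₆ be six distinct points lying on a circle in the Euclidean plane ℝ². Suppose the lines A₁A₂ and A₄A₅ meet in exactly one point P₁, the lines A₂A₃ and A₅A₆ meet in exactly one point P₂, and the lines A₃A₄ and A₆A₁ meet in exactly one point P₃. Then P₁, P₂ and P₃ are collinear. -/
open ComplexConjugate

/-- Core algebraic computation: a point on the chord through two unit-circle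
points `wa`, `wb` satisfies `wp + wa*wb*conj wp = wa + wb`. -/
private lemma pascal_line_core (wa wb wp : ℂ) (t : ℝ) (hwa : wa * conj wa = 1)
    (hwb : wb * conj wb = 1) (h : wp = wa + (t : ℂ) * (wb - wa)) :
    wp + wa * wb * conj wp = wa + wb := by
  subst h
  simp only [map_add, map_mul, map_sub, Complex.conj_ofReal]
  linear_combination (wb - (t : ℂ) * wb) * hwa + ((t : ℂ) * wa) * hwb

private lemma pascal_line_eq {o a b p : ℂ} {r : ℝ} (hr : 0 < r) {t : ℝ}
    (ha : ‖a - o‖ = r) (hb : ‖b - o‖ = r)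
    (hp : p - a = t • (b - a)) :
    (p - o) / (r : ℂ) + ((a - o) / (r : ℂ)) * ((b - o) / (r : ℂ)) * conj ((p - o) / (r : ℂ))
      = (a - o) / (r : ℂ) + (b - o) / (r : ℂ) := by
  have hr0 : (r : ℂ) ≠ 0 := by exact_mod_cast hr.ne'
  have unit : ∀ z : ℂ, ‖z - o‖ = r →
      ((z - o) / (r : ℂ)) * conj ((z - o) / (r : ℂ)) = 1 := by
    intro z hz
    have habs : ‖(z - o) / (r : ℂ)‖ = 1 := by
      rw [norm_div, Complex.norm_real, Real.norm_eq_abs, abs_of_pos hr, hz, div_self hr.ne']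
    rw [Complex.mul_conj, Complex.normSq_eq_norm_sq, habs]
    norm_num
  rw [Complex.real_smul] at hp
  apply pascal_line_core _ _ _ t (unit a ha) (unit b hb)
  field_simp
  linear_combination hp

/-- The key rational identity underlying Pascal's theorem. -/
private lemma pascal_key (w1 w2 w3 w4 w5 w6 q1 q2 q3 c1 c2 c3 : ℂ)
    (h41 : w4 ≠ w1) (h42 : w4 ≠ w2) (h52 : w5 ≠ w2) (h53 : w5 ≠ w3)
    (h63 : w6 ≠ w3) (h64 : w6 ≠ w4)
    (e1 : q1 + w1 * w2 * c1 = w1 + w2) (e1' : q1 + w4 * w5 * c1 = w4 + w5)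
    (e2 : q2 + w2 * w3 * c2 = w2 + w3) (e2' : q2 + w5 * w6 * c2 = w5 + w6)
    (e3 : q3 + w3 * w4 * c3 = w3 + w4) (e3' : q3 + w6 * w1 * c3 = w6 + w1) :
    (q2 - q1) * (c3 - c1) = (c2 - c1) * (q3 - q1) := by
  have hd1 : w1 * w2 - w4 * w5 ≠ 0 := by
    intro h
    have hs : w1 + w2 - (w4 + w5) = 0 := by linear_combination c1 * h - e1 + e1'
    have h4 : (w4 - w1) * (w4 - w2) = 0 := by linear_combination (-w4) * hs + h
    rcases mul_eq_zero.1 h4 with h' | h'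
    · exact h41 (sub_eq_zero.1 h')
    · exact h42 (sub_eq_zero.1 h')
  have hd2 : w2 * w3 - w5 * w6 ≠ 0 := by
    intro h
    have hs : w2 + w3 - (w5 + w6) = 0 := by linear_combination c2 * h - e2 + e2'
    have h4 : (w5 - w2) * (w5 - w3) = 0 := by linear_combination (-w5) * hs + h
    rcases mul_eq_zero.1 h4 with h' | h'
    · exact h52 (sub_eq_zero.1 h')
    · exact h53 (sub_eq_zero.1 h')
  have hd3 : w3 * w4 - w6 * w1 ≠ 0 := by
    intro h
    have hs : w3 + w4 - (w6 + w1) = 0 := by linear_combination c3 * h - e3 + e3'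
    have h4 : (w6 - w3) * (w6 - w4) = 0 := by linear_combination (-w6) * hs + h
    rcases mul_eq_zero.1 h4 with h' | h'
    · exact h63 (sub_eq_zero.1 h')
    · exact h64 (sub_eq_zero.1 h')
  have hc1 : c1 = (w1 + w2 - (w4 + w5)) / (w1 * w2 - w4 * w5) := by
    rw [eq_div_iff hd1]; linear_combination e1 - e1'
  have hq1 : q1 = (w1 * w2 * (w4 + w5) - w4 * w5 * (w1 + w2)) / (w1 * w2 - w4 * w5) := by
    rw [eq_div_iff hd1]; linear_combination w1 * w2 * e1' - w4 * w5 * e1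
  have hc2 : c2 = (w2 + w3 - (w5 + w6)) / (w2 * w3 - w5 * w6) := by
    rw [eq_div_iff hd2]; linear_combination e2 - e2'
  have hq2 : q2 = (w2 * w3 * (w5 + w6) - w5 * w6 * (w2 + w3)) / (w2 * w3 - w5 * w6) := by
    rw [eq_div_iff hd2]; linear_combination w2 * w3 * e2' - w5 * w6 * e2
  have hc3 : c3 = (w3 + w4 - (w6 + w1)) / (w3 * w4 - w6 * w1) := by
    rw [eq_div_iff hd3]; linear_combination e3 - e3'
  have hq3 : q3 = (w3 * w4 * (w6 + w1) - w6 * w1 * (w3 + w4)) / (w3 * w4 - w6 * w1) := by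
    rw [eq_div_iff hd3]; linear_combination w3 * w4 * e3' - w6 * w1 * e3
  rw [hc1, hq1, hc2, hq2, hc3, hq3]
  rw [div_sub_div _ _ hd2 hd1, div_sub_div _ _ hd3 hd1, div_sub_div _ _ hd2 hd1,
    div_sub_div _ _ hd3 hd1, div_mul_div_comm, div_mul_div_comm,
    div_eq_div_iff (mul_ne_zero (mul_ne_zero hd2 hd1) (mul_ne_zero hd3 hd1))
      (mul_ne_zero (mul_ne_zero hd2 hd1) (mul_ne_zero hd3 hd1))]
  ring

/-- Collinearity criterion in `ℂ`. -/
private lemma pascal_collinear_of_conj {u v w : ℂ}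
    (h : (v - u) * conj (w - u) = conj (v - u) * (w - u)) :
    Collinear ℝ ({u, v, w} : Set ℂ) := by
  rcases eq_or_ne w u with hwu0 | hw
  · have hsub : ({u, v, w} : Set ℂ) ⊆ {u, v} := by
      intro x hx
      simp only [Set.mem_insert_iff, Set.mem_singleton_iff] at hx ⊢
      rcases hx with rfl | rfl | rfl
      · exact Or.inl rfl
      · exact Or.inr rfl
      · exact Or.inl hwu0
    exact (collinear_pair ℝ u v).subset hsub
  · rw [collinear_iff_of_mem (Set.mem_insert u {v, w})]
    refine ⟨w - u, ?_⟩
    have hwu : w - u ≠ 0 := sub_ne_zero.2 hw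
    have hcu : conj (w - u) ≠ 0 := fun h0 => hwu (by simpa using congrArg conj h0)
    set s : ℂ := (v - u) / (w - u) with hs
    have hsreal : conj s = s := by
      rw [hs, map_div₀, div_eq_div_iff hcu hwu]
      linear_combination -h
    have hsre : (s.re : ℂ) = s := Complex.conj_eq_iff_re.1 hsreal
    have hvs : v = s.re • (w - u) +ᵥ u := by
      have hv : v - u = (s.re : ℂ) * (w - u) := by
        rw [hsre, hs, div_mul_cancel₀ _ hwu]
      rw [Complex.real_smul]
      simpa [vadd_eq_add, sub_eq_iff_eq_add] using hv
    intro p hp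
    rcases hp with rfl | hp
    · exact ⟨0, by simp⟩
    rcases hp with rfl | hp
    · exact ⟨s.re, hvs⟩
    · rw [Set.mem_singleton_iff] at hp
      subst hp
      exact ⟨1, by simp [vadd_eq_add]⟩

/-- **Pascal's theorem for a circle.**
If six distinct points `A₁, …, A₆` lie on a circle and the three pairs of opposite
sides of the hexagon `A₁A₂A₃A₄A₅A₆` meet in single points `P₁`, `P₂`, `P₃`
respectively, then `P₁`, `P₂`, `P₃` are collinear. -/
theorem pascal_theorem_circle
    (A₁ A₂ A₃ A₄ A₅ A₆ P₁ P₂ P₃ O : EuclideanSpace ℝ (Fin 2)) (r : ℝ) (hr : 0 < r)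
    (hdist : [A₁, A₂, A₃, A₄, A₅, A₆].Pairwise (· ≠ ·))
    (h₁ : dist A₁ O = r) (h₂ : dist A₂ O = r) (h₃ : dist A₃ O = r)
    (h₄ : dist A₄ O = r) (h₅ : dist A₅ O = r) (h₆ : dist A₆ O = r)
    (hP₁ : (affineSpan ℝ {A₁, A₂} : Set (EuclideanSpace ℝ (Fin 2))) ∩
      (affineSpan ℝ {A₄, A₅} : Set (EuclideanSpace ℝ (Fin 2))) = {P₁})
    (hP₂ : (affineSpan ℝ {A₂, A₃} : Set (EuclideanSpace ℝ (Fin 2))) ∩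
      (affineSpan ℝ {A₅, A₆} : Set (EuclideanSpace ℝ (Fin 2))) = {P₂})
    (hP₃ : (affineSpan ℝ {A₃, A₄} : Set (EuclideanSpace ℝ (Fin 2))) ∩
      (affineSpan ℝ {A₆, A₁} : Set (EuclideanSpace ℝ (Fin 2))) = {P₃}) :
    Collinear ℝ {P₁, P₂, P₃} := by
  classical
  let e : EuclideanSpace ℝ (Fin 2) ≃ₗᵢ[ℝ] ℂ :=
    (Complex.isometryOfOrthonormal (EuclideanSpace.basisFun (Fin 2) ℝ)).symm
  have hr0 : (r : ℂ) ≠ 0 := by exact_mod_cast hr.ne'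
  have habs : ∀ A : EuclideanSpace ℝ (Fin 2), dist A O = r →
      ‖e A - e O‖ = r := by
    intro A hA
    rw [← Complex.dist_eq, LinearIsometryEquiv.dist_map]
    exact hA
  -- extract memberships
  have mem₁ : P₁ ∈ (affineSpan ℝ {A₁, A₂} : Set (EuclideanSpace ℝ (Fin 2))) ∩
      (affineSpan ℝ {A₄, A₅} : Set (EuclideanSpace ℝ (Fin 2))) := by
    rw [hP₁]; exact rfl
  have mem₂ : P₂ ∈ (affineSpan ℝ {A₂, A₃} : Set (EuclideanSpace ℝ (Fin 2))) ∩
      (affineSpan ℝ {A₅, A₆} : Set (EuclideanSpace ℝ (Fin 2))) := by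
    rw [hP₂]; exact rfl
  have mem₃ : P₃ ∈ (affineSpan ℝ {A₃, A₄} : Set (EuclideanSpace ℝ (Fin 2))) ∩
      (affineSpan ℝ {A₆, A₁} : Set (EuclideanSpace ℝ (Fin 2))) := by
    rw [hP₃]; exact rfl
  -- line equations
  have line : ∀ P A B : EuclideanSpace ℝ (Fin 2), dist A O = r → dist B O = r →
      P ∈ (affineSpan ℝ {A, B} : Set (EuclideanSpace ℝ (Fin 2))) →
      (e P - e O) / (r : ℂ) + ((e A - e O) / (r : ℂ)) * ((e B - e O) / (r : ℂ)) *
        conj ((e P - e O) / (r : ℂ)) = (e A - e O) / (r : ℂ) + (e B - e O) / (r : ℂ) := by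
    intro P A B hA hB hP
    have hP' : (P -ᵥ A) +ᵥ A ∈ affineSpan ℝ ({A, B} : Set (EuclideanSpace ℝ (Fin 2))) := by
      rwa [vsub_vadd]
    obtain ⟨t, ht⟩ := vadd_left_mem_affineSpan_pair.mp hP'
    have ht' : e P - e A = t • (e B - e A) := by
      have h0 := congrArg e ht
      simp only [vsub_eq_sub, map_smul, map_sub] at h0
      exact h0.symm
    exact pascal_line_eq hr (habs A hA) (habs B hB) ht'
  -- distinctness of the normalized points
  have wne : ∀ A B : EuclideanSpace ℝ (Fin 2), A ≠ B →
      (e A - e O) / (r : ℂ) ≠ (e B - e O) / (r : ℂ) := by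
    intro A B hAB h
    apply hAB
    apply e.injective
    have h' : e A - e O = e B - e O := by
      have h2 := congrArg (fun z : ℂ => z * (r : ℂ)) h
      simpa [div_mul_cancel₀, hr0] using h2
    exact sub_left_injective h'
  simp only [List.pairwise_cons, List.mem_cons, List.mem_singleton, List.not_mem_nil,
    forall_eq_or_imp, forall_eq, and_true] at hdist
  obtain ⟨⟨h12, h13, h14, h15, h16, -⟩, ⟨h23, h24, h25, h26, -⟩, ⟨h34, h35, h36, -⟩,
    ⟨h45, h46, -⟩, ⟨h56, -⟩, -⟩ := hdist
  set q₁ : ℂ := (e P₁ - e O) / (r : ℂ) with hq₁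
  set q₂ : ℂ := (e P₂ - e O) / (r : ℂ) with hq₂
  set q₃ : ℂ := (e P₃ - e O) / (r : ℂ) with hq₃
  have key : (q₂ - q₁) * (conj q₃ - conj q₁) = (conj q₂ - conj q₁) * (q₃ - q₁) := by
    apply pascal_key ((e A₁ - e O) / (r : ℂ)) ((e A₂ - e O) / (r : ℂ))
      ((e A₃ - e O) / (r : ℂ)) ((e A₄ - e O) / (r : ℂ)) ((e A₅ - e O) / (r : ℂ))
      ((e A₆ - e O) / (r : ℂ)) q₁ q₂ q₃ (conj q₁) (conj q₂) (conj q₃)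
    · exact wne A₄ A₁ (fun h => h14 h.symm)
    · exact wne A₄ A₂ (fun h => h24 h.symm)
    · exact wne A₅ A₂ (fun h => h25 h.symm)
    · exact wne A₅ A₃ (fun h => h35 h.symm)
    · exact wne A₆ A₃ (fun h => h36 h.symm)
    · exact wne A₆ A₄ (fun h => h46 h.symm)
    · exact line P₁ A₁ A₂ h₁ h₂ mem₁.1
    · exact line P₁ A₄ A₅ h₄ h₅ mem₁.2
    · exact line P₂ A₂ A₃ h₂ h₃ mem₂.1
    · exact line P₂ A₅ A₆ h₅ h₆ mem₂.2
    · exact line P₃ A₃ A₄ h₃ h₄ mem₃.1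
    · exact line P₃ A₆ A₁ h₆ h₁ mem₃.2
  have hd2 : e P₂ - e P₁ = (r : ℂ) * (q₂ - q₁) := by
    rw [hq₂, hq₁]; field_simp; ring
  have hd3 : e P₃ - e P₁ = (r : ℂ) * (q₃ - q₁) := by
    rw [hq₃, hq₁]; field_simp; ring
  have hconj : (e P₂ - e P₁) * conj (e P₃ - e P₁)
      = conj (e P₂ - e P₁) * (e P₃ - e P₁) := by
    rw [hd2, hd3]
    simp only [map_mul, map_sub, Complex.conj_ofReal]
    calc (r : ℂ) * (q₂ - q₁) * ((r : ℂ) * (conj q₃ - conj q₁))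
        = (r : ℂ) ^ 2 * ((q₂ - q₁) * (conj q₃ - conj q₁)) := by ring
      _ = (r : ℂ) ^ 2 * ((conj q₂ - conj q₁) * (q₃ - q₁)) := by rw [key]
      _ = (r : ℂ) * (conj q₂ - conj q₁) * ((r : ℂ) * (q₃ - q₁)) := by ring
  have hcol : Collinear ℝ ({e P₁, e P₂, e P₃} : Set ℂ) :=
    pascal_collinear_of_conj hconj
  rw [collinear_iff_exists_forall_eq_smul_vadd] at hcol ⊢
  obtain ⟨p₀, v, hv⟩ := hcol
  refine ⟨e.symm p₀, e.symm v, ?_⟩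
  intro p hp
  have hp' : e p ∈ ({e P₁, e P₂, e P₃} : Set ℂ) := by
    rcases hp with rfl | rfl | rfl
    · exact Set.mem_insert _ _
    · exact Set.mem_insert_of_mem _ (Set.mem_insert _ _)
    · exact Set.mem_insert_of_mem _ (Set.mem_insert_of_mem _ rfl)
  obtain ⟨t, ht⟩ := hv (e p) hp'
  refine ⟨t, ?_⟩
  apply e.injective
  rw [ht]
  simp [vadd_eq_add, map_add, map_smul]
end

section
/- Let c₁ and c₂ be two circles in the Euclidean plane ℝ² intersecting in two distinct points X and Y. Let a line through X meet c₁ again in a point A with A ≠ X and meet c₂ again in a point A' with A' ≠ X (so X, A, A' are collinear), and let a line through Y meet c₁ again in a point B with B ≠ Y and meet c₂ again in a point B' with B' ≠ Y (so Y, B, B' are collinear). Assume A ≠ B and A' ≠ B'. Then the line AB is parallel to the line A'B'. -/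
open EuclideanGeometry Real

/-- **Reim's theorem.**
Let two circles meet in two distinct points `X` and `Y`.  A line through `X` meets the
first circle again in `A` and the second again in `A'`; a line through `Y` meets the
first circle again in `B` and the second again in `B'`.  Then the line `AB` is parallel
to the line `A'B'` (their direction subspaces coincide). -/
theorem reim_theorem
    (O₁ O₂ : EuclideanSpace ℝ (Fin 2)) (r₁ r₂ : ℝ) (hr₁ : 0 < r₁) (hr₂ : 0 < r₂)
    (X Y A A' B B' : EuclideanSpace ℝ (Fin 2)) (hXY : X ≠ Y)
    (hX₁ : dist X O₁ = r₁) (hX₂ : dist X O₂ = r₂)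
    (hY₁ : dist Y O₁ = r₁) (hY₂ : dist Y O₂ = r₂)
    (hA : dist A O₁ = r₁) (hA' : dist A' O₂ = r₂)
    (hAX : A ≠ X) (hA'X : A' ≠ X) (hlineA : Collinear ℝ {X, A, A'})
    (hB : dist B O₁ = r₁) (hB' : dist B' O₂ = r₂)
    (hBY : B ≠ Y) (hB'Y : B' ≠ Y) (hlineB : Collinear ℝ {Y, B, B'})
    (hAB : A ≠ B) (hA'B' : A' ≠ B') :
    (affineSpan ℝ {A, B}).direction = (affineSpan ℝ {A', B'}).direction := by
  haveI : Fact (Module.finrank ℝ (EuclideanSpace ℝ (Fin 2)) = 2) :=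
    ⟨finrank_euclideanSpace_fin⟩
  haveI : Module.Oriented ℝ (EuclideanSpace ℝ (Fin 2)) (Fin 2) :=
    ⟨Module.Basis.orientation (EuclideanSpace.basisFun (Fin 2) ℝ).toBasis⟩
  set o := (Module.Oriented.positiveOrientation :
    Orientation ℝ (EuclideanSpace ℝ (Fin 2)) (Fin 2))
  -- the two spheres
  set s₁ : EuclideanGeometry.Sphere (EuclideanSpace ℝ (Fin 2)) := ⟨O₁, r₁⟩ with hs₁
  set s₂ : EuclideanGeometry.Sphere (EuclideanSpace ℝ (Fin 2)) := ⟨O₂, r₂⟩ with hs₂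
  have hXs₁ : X ∈ s₁ := hX₁
  have hYs₁ : Y ∈ s₁ := hY₁
  have hXs₂ : X ∈ s₂ := hX₂
  have hYs₂ : Y ∈ s₂ := hY₂
  have hAs₁ : A ∈ s₁ := hA
  have hBs₁ : B ∈ s₁ := hB
  have hA's₂ : A' ∈ s₂ := hA'
  have hB's₂ : B' ∈ s₂ := hB'
  -- inscribed angle theorem on circle 1: points B, A, Y, X
  have h1 : (2 : ℤ) • ∡ B A X = (2 : ℤ) • ∡ B Y X :=
    Sphere.two_zsmul_oangle_eq (s := s₁) hB hA hYs₁ hXs₁ hAB hAX hBY.symm hXY.symm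
  -- inscribed angle theorem on circle 2: points B', A', Y, X
  have h2 : (2 : ℤ) • ∡ B' A' X = (2 : ℤ) • ∡ B' Y X :=
    Sphere.two_zsmul_oangle_eq (s := s₂) hB' hA' hYs₂ hXs₂ hA'B' hA'X hB'Y.symm hXY.symm
  -- B, Y, B' collinear: replace B by B' at vertex Y
  have hcolB : Collinear ℝ ({B, Y, B'} : Set _) := by
    have : ({B, Y, B'} : Set _) ⊆ {Y, B, B'} := by intro p hp; simp at hp ⊢; tauto
    exact hlineB.subset this
  have h3 : (2 : ℤ) • ∡ B Y X = (2 : ℤ) • ∡ B' Y X :=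
    hcolB.two_zsmul_oangle_eq_left hBY hB'Y
  have hmain : (2 : ℤ) • ∡ B A X = (2 : ℤ) • ∡ B' A' X := by
    rw [h1, h3, ← h2]
  -- pass to vectors
  have hXA : X -ᵥ A ≠ 0 := vsub_ne_zero.2 hAX.symm
  have hXA' : X -ᵥ A' ≠ 0 := vsub_ne_zero.2 hA'X.symm
  have hBA : B -ᵥ A ≠ 0 := vsub_ne_zero.2 hAB.symm.symm.symm
  have hB'A' : B' -ᵥ A' ≠ 0 := vsub_ne_zero.2 (fun h => hA'B' h.symm)
  -- span of X - A equals span of X - A' (all on the line through X, A, A')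
  have hspan : (ℝ ∙ (X -ᵥ A)) = ℝ ∙ (X -ᵥ A') := by
    rw [← vectorSpan_pair, ← vectorSpan_pair]
    have e1 : vectorSpan ℝ ({X, A} : Set _) = vectorSpan ℝ ({X, A, A'} : Set _) := by
      apply le_antisymm
      · exact vectorSpan_mono ℝ (by intro p hp; simp at hp ⊢; tauto)
      · rw [← direction_affineSpan, ← direction_affineSpan]
        apply AffineSubspace.direction_le
        apply affineSpan_le.2
        intro p hp
        have hXmem : X ∈ affineSpan ℝ ({X, A} : Set _) :=
          mem_affineSpan ℝ (by simp)
        have hAmem : A ∈ affineSpan ℝ ({X, A} : Set _) :=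
          mem_affineSpan ℝ (by simp)
        simp only [Set.mem_insert_iff, Set.mem_singleton_iff] at hp
        rcases hp with h | h | h
        · rw [h]; exact hXmem
        · rw [h]; exact hAmem
        · rw [h]
          exact hlineA.mem_affineSpan_of_mem_of_ne (by simp : X ∈ ({X, A, A'} : Set _))
            (by simp : A ∈ ({X, A, A'} : Set _)) (by simp : A' ∈ ({X, A, A'} : Set _))
            hAX.symm
    have e2 : vectorSpan ℝ ({X, A'} : Set _) = vectorSpan ℝ ({X, A, A'} : Set _) := by
      apply le_antisymm
      · exact vectorSpan_mono ℝ (by intro p hp; simp at hp ⊢; tauto)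
      · rw [← direction_affineSpan, ← direction_affineSpan]
        apply AffineSubspace.direction_le
        apply affineSpan_le.2
        intro p hp
        have hXmem : X ∈ affineSpan ℝ ({X, A'} : Set _) :=
          mem_affineSpan ℝ (by simp)
        have hA'mem : A' ∈ affineSpan ℝ ({X, A'} : Set _) :=
          mem_affineSpan ℝ (by simp)
        simp only [Set.mem_insert_iff, Set.mem_singleton_iff] at hp
        rcases hp with h | h | h
        · rw [h]; exact hXmem
        · rw [h]
          exact hlineA.mem_affineSpan_of_mem_of_ne (by simp : X ∈ ({X, A, A'} : Set _))
            (by simp : A' ∈ ({X, A, A'} : Set _)) (by simp : A ∈ ({X, A, A'} : Set _))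
            hA'X.symm
        · rw [h]; exact hA'mem
    rw [e1, e2]
  -- rewrite the angle equality as a vector statement
  have hvec : (2 : ℤ) • o.oangle (B -ᵥ A) (X -ᵥ A)
      = (2 : ℤ) • o.oangle (B' -ᵥ A') (X -ᵥ A') := hmain
  have hrepl : (2 : ℤ) • o.oangle (B' -ᵥ A') (X -ᵥ A')
      = (2 : ℤ) • o.oangle (B' -ᵥ A') (X -ᵥ A) :=
    o.two_zsmul_oangle_of_span_eq_of_span_eq rfl hspan.symm
  have hfinal : (2 : ℤ) • o.oangle (B -ᵥ A) (B' -ᵥ A') = 0 := by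
    have hadd : o.oangle (B -ᵥ A) (B' -ᵥ A')
        = o.oangle (B -ᵥ A) (X -ᵥ A) + o.oangle (X -ᵥ A) (B' -ᵥ A') := by
      rw [o.oangle_add hBA hXA hB'A']
    have hrev : o.oangle (X -ᵥ A) (B' -ᵥ A') = - o.oangle (B' -ᵥ A') (X -ᵥ A) :=
      o.oangle_rev _ _
    rw [hadd, hrev, smul_add, smul_neg, hvec, hrepl, add_neg_cancel]
  -- conclude span equality
  have hzp : o.oangle (B -ᵥ A) (B' -ᵥ A') = 0 ∨ o.oangle (B -ᵥ A) (B' -ᵥ A') = π :=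
    Real.Angle.two_zsmul_eq_zero_iff.1 hfinal
  obtain ⟨r, hr⟩ := (o.oangle_eq_zero_or_eq_pi_iff_right_eq_smul.1 hzp).resolve_left hBA
  have hrne : r ≠ 0 := by rintro rfl; simp at hr; exact hB'A' hr
  rw [direction_affineSpan, direction_affineSpan, vectorSpan_pair_rev, vectorSpan_pair_rev, hr,
    Submodule.span_singleton_smul_eq (IsUnit.mk0 r hrne) _]
end

section
/- Let Q₁ and Q₂ be two quadratic forms on ℝ² with Q₁ ≠ Q₂. Then the set {x ∈ ℝ² : Q₁(x) = 1 and Q₂(x) = 1} has at most four elements. That is, two distinct central conics with the same center have at most four points in common. -/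
open QuadraticMap

/-- The four candidate intersection points on the two lines `ℝ • v₁` and `ℝ • v₂`. -/
private noncomputable def fourSet (Q₁ : QuadraticForm ℝ (ℝ × ℝ)) (v₁ v₂ : ℝ × ℝ) : Finset (ℝ × ℝ) :=
  {Real.sqrt (Q₁ v₁)⁻¹ • v₁, -(Real.sqrt (Q₁ v₁)⁻¹ • v₁),
   Real.sqrt (Q₁ v₂)⁻¹ • v₂, -(Real.sqrt (Q₁ v₂)⁻¹ • v₂)}

private lemma fourSet_card (Q₁ : QuadraticForm ℝ (ℝ × ℝ)) (v₁ v₂ : ℝ × ℝ) :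
    (fourSet Q₁ v₁ v₂).card ≤ 4 := by
  unfold fourSet
  refine le_trans (Finset.card_insert_le _ _) (Nat.succ_le_succ ?_)
  refine le_trans (Finset.card_insert_le _ _) (Nat.succ_le_succ ?_)
  refine le_trans (Finset.card_insert_le _ _) (Nat.succ_le_succ ?_)
  simp

private lemma expand_qf (Q : QuadraticForm ℝ (ℝ × ℝ)) (x : ℝ × ℝ) :
    Q x = Q (1, 0) * x.1 ^ 2 + polar Q (1, 0) (0, 1) * x.1 * x.2 + Q (0, 1) * x.2 ^ 2 := by
  have hx : x = x.1 • ((1 : ℝ), (0 : ℝ)) + x.2 • ((0 : ℝ), (1 : ℝ)) := by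
    ext <;> simp
  have key : Q (x.1 • ((1 : ℝ), (0 : ℝ)) + x.2 • ((0 : ℝ), (1 : ℝ)))
      = Q (1, 0) * x.1 ^ 2 + polar Q (1, 0) (0, 1) * x.1 * x.2 + Q (0, 1) * x.2 ^ 2 := by
    have hp : Q (x.1 • ((1 : ℝ), (0 : ℝ)) + x.2 • ((0 : ℝ), (1 : ℝ)))
        = Q (x.1 • ((1 : ℝ), (0 : ℝ))) + Q (x.2 • ((0 : ℝ), (1 : ℝ)))
          + polar Q (x.1 • ((1 : ℝ), (0 : ℝ))) (x.2 • ((0 : ℝ), (1 : ℝ))) := by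
      simp [polar]
    rw [hp, Q.map_smul, Q.map_smul, polar_smul_left, polar_smul_right]
    simp only [smul_eq_mul]
    ring
  conv_lhs => rw [hx]
  exact key

/-- Points on the line `ℝ • v` where `Q₁` takes the value 1. -/
private lemma line_lemma (Q₁ : QuadraticForm ℝ (ℝ × ℝ)) (v x : ℝ × ℝ) (y : ℝ)
    (hx : x = y • v) (h1 : Q₁ x = 1) :
    x = Real.sqrt (Q₁ v)⁻¹ • v ∨ x = -(Real.sqrt (Q₁ v)⁻¹ • v) := by
  subst hx
  rw [Q₁.map_smul, smul_eq_mul] at h1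
  have hy : y ≠ 0 := by rintro rfl; simp at h1
  have hQv : Q₁ v = (y * y)⁻¹ := by
    field_simp
    linarith [h1]
  have hsq : (Q₁ v)⁻¹ = y ^ 2 := by rw [hQv]; field_simp
  have habs : Real.sqrt (Q₁ v)⁻¹ = |y| := by rw [hsq, Real.sqrt_sq_eq_abs]
  rcases abs_choice y with hy' | hy'
  · left; rw [habs, hy']
  · right; rw [habs, hy', neg_smul, neg_neg]

/-- If `x` lies on one of the two lines and `Q₁ x = 1` then `x` is one of the four points. -/
private lemma mem_fourSet (Q₁ : QuadraticForm ℝ (ℝ × ℝ)) (v₁ v₂ x : ℝ × ℝ)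
    (hl : (∃ y : ℝ, x = y • v₁) ∨ (∃ y : ℝ, x = y • v₂)) (h1 : Q₁ x = 1) :
    x ∈ fourSet Q₁ v₁ v₂ := by
  unfold fourSet
  rcases hl with ⟨y, hy⟩ | ⟨y, hy⟩
  · rcases line_lemma Q₁ v₁ x y hy h1 with h' | h' <;> simp [h']
  · rcases line_lemma Q₁ v₂ x y hy h1 with h' | h' <;> simp [h']

/-- **Two distinct central conics with a common center meet in at most four points.**
If `Q₁ ≠ Q₂` are quadratic forms on `ℝ²`, then the set of common solutions of
`Q₁ x = 1` and `Q₂ x = 1` has at most four elements. -/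
theorem central_conics_at_most_four_common_points
    (Q₁ Q₂ : QuadraticForm ℝ (ℝ × ℝ)) (h : Q₁ ≠ Q₂) :
    ∃ S : Finset (ℝ × ℝ), S.card ≤ 4 ∧
      {x : ℝ × ℝ | Q₁ x = 1 ∧ Q₂ x = 1} ⊆ ↑S := by
  set D : QuadraticForm ℝ (ℝ × ℝ) := Q₁ - Q₂ with hDdef
  have hD : D ≠ 0 := sub_ne_zero.mpr h
  set a : ℝ := D (1, 0) with hadef
  set c : ℝ := D (0, 1) with hcdef
  set b : ℝ := polar D (1, 0) (0, 1) with hbdef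
  have hexp : ∀ x : ℝ × ℝ, D x = a * x.1 ^ 2 + b * x.1 * x.2 + c * x.2 ^ 2 :=
    expand_qf D
  have hDx : ∀ x : ℝ × ℝ, (x ∈ {x : ℝ × ℝ | Q₁ x = 1 ∧ Q₂ x = 1}) →
      a * x.1 ^ 2 + b * x.1 * x.2 + c * x.2 ^ 2 = 0 := by
    intro x hx
    rw [← hexp x, hDdef]
    simp only [QuadraticMap.sub_apply]
    rw [hx.1, hx.2, sub_self]
  have hQ0 : ∀ x : ℝ × ℝ, x ∈ {x : ℝ × ℝ | Q₁ x = 1 ∧ Q₂ x = 1} → x ≠ 0 := by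
    intro x hx hx0
    have := hx.1
    rw [hx0] at this
    simp at this
  by_cases ha : a ≠ 0
  · -- main case: a ≠ 0, solve for t = x.1 / x.2
    set s : ℝ := Real.sqrt (discrim a b c) with hsdef
    refine ⟨fourSet Q₁ ((-b + s) / (2 * a), 1) ((-b - s) / (2 * a), 1),
      fourSet_card _ _ _, ?_⟩
    intro x hx
    have hroot0 := hDx x hx
    have hx2 : x.2 ≠ 0 := by
      intro h2
      rw [h2] at hroot0
      have hx1 : x.1 = 0 := by
        have : a * x.1 ^ 2 = 0 := by linarith [hroot0]
        rcases mul_eq_zero.mp this with h' | h'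
        · exact absurd h' ha
        · exact pow_eq_zero_iff (by norm_num) |>.mp h'
      exact hQ0 x hx (Prod.ext hx1 h2)
    have hxeq : x = x.2 • ((x.1 / x.2 : ℝ), (1 : ℝ)) := by
      ext
      · simp; field_simp
      · simp
    have hroot : a * ((x.1 / x.2) * (x.1 / x.2)) + b * (x.1 / x.2) + c = 0 := by
      field_simp
      linear_combination hroot0
    have hdisc : discrim a b c = s * s := by
      have hd := discrim_eq_sq_of_quadratic_eq_zero hroot
      rw [hsdef, Real.mul_self_sqrt (by rw [hd]; positivity)]
    have ht := (quadratic_eq_zero_iff ha hdisc (x.1 / x.2)).mp hroot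
    apply mem_fourSet Q₁ _ _ x _ hx.1
    rcases ht with h' | h'
    · exact Or.inl ⟨x.2, by rw [h'] at hxeq; exact hxeq⟩
    · exact Or.inr ⟨x.2, by rw [h'] at hxeq; exact hxeq⟩
  · push_neg at ha
    by_cases hc : c ≠ 0
    · -- symmetric case: c ≠ 0, solve for t = x.2 / x.1
      set s : ℝ := Real.sqrt (discrim c b a) with hsdef
      refine ⟨fourSet Q₁ (1, (-b + s) / (2 * c)) (1, (-b - s) / (2 * c)),
        fourSet_card _ _ _, ?_⟩
      intro x hx
      have hroot0 := hDx x hx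
      have hx1 : x.1 ≠ 0 := by
        intro h1
        rw [h1, ha] at hroot0
        have hx2 : x.2 = 0 := by
          have : c * x.2 ^ 2 = 0 := by linarith [hroot0]
          rcases mul_eq_zero.mp this with h' | h'
          · exact absurd h' hc
          · exact pow_eq_zero_iff (by norm_num) |>.mp h'
        exact hQ0 x hx (Prod.ext h1 hx2)
      have hxeq : x = x.1 • ((1 : ℝ), (x.2 / x.1 : ℝ)) := by
        ext
        · simp
        · simp; field_simp
      have hroot : c * ((x.2 / x.1) * (x.2 / x.1)) + b * (x.2 / x.1) + a = 0 := by
        field_simp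
        linear_combination hroot0
      have hdisc : discrim c b a = s * s := by
        have hd := discrim_eq_sq_of_quadratic_eq_zero hroot
        rw [hsdef, Real.mul_self_sqrt (by rw [hd]; positivity)]
      have ht := (quadratic_eq_zero_iff hc hdisc (x.2 / x.1)).mp hroot
      apply mem_fourSet Q₁ _ _ x _ hx.1
      rcases ht with h' | h'
      · exact Or.inl ⟨x.1, by rw [h'] at hxeq; exact hxeq⟩
      · exact Or.inr ⟨x.1, by rw [h'] at hxeq; exact hxeq⟩
    · -- a = c = 0, so b ≠ 0 and D x = b * x.1 * x.2
      push_neg at hc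
      have hb : b ≠ 0 := by
        intro hb0
        apply hD
        ext x
        rw [hexp x, ha, hb0, hc]
        simp
      refine ⟨fourSet Q₁ ((1 : ℝ), (0 : ℝ)) ((0 : ℝ), (1 : ℝ)), fourSet_card _ _ _, ?_⟩
      intro x hx
      have hroot0 := hDx x hx
      rw [ha, hc] at hroot0
      have : b * (x.1 * x.2) = 0 := by linarith [hroot0]
      apply mem_fourSet Q₁ _ _ x _ hx.1
      rcases mul_eq_zero.mp this with h' | h'
      · exact absurd h' hb
      rcases mul_eq_zero.mp h' with h1 | h2
      · exact Or.inr ⟨x.2, by ext <;> simp [h1]⟩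
      · exact Or.inl ⟨x.1, by ext <;> simp [h2]⟩
end

section
/- Let A, B, C be three non-collinear points in the Euclidean plane ℝ² and let Γ be their circumcircle. Then there exists a point M ∈ Γ with M ≠ A such that dist(M, B) = dist(M, C) (so M lies on the perpendicular bisector of the segment BC) and the undirected angles satisfy ∠BAM = ∠MAC (so the ray AM bisects the angle at A). In other words, the perpendicular bisector of the side BC and the angle bisector at the opposite vertex A meet on the circumcircle of the triangle. -/
open EuclideanGeometry RealInnerProductSpace

noncomputable instance factFinrankE2 : Fact (Module.finrank ℝ (EuclideanSpace ℝ (Fin 2)) = 2) :=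
  ⟨finrank_euclideanSpace_fin⟩

noncomputable instance orientedE2 : Module.Oriented ℝ (EuclideanSpace ℝ (Fin 2)) (Fin 2) :=
  ⟨(EuclideanSpace.basisFun (Fin 2) ℝ).toBasis.orientation⟩

/-- A point whose difference with the circumcenter is orthogonal to `C - B` is
equidistant from `B` and `C`. -/
lemma equidist_aux (O B C M : EuclideanSpace ℝ (Fin 2))
    (h : (inner ℝ (M - O) (C - B) : ℝ) = 0) (hOBC : dist B O = dist C O) :
    dist M B = dist M C := by
  have hsq : dist M B ^ 2 = dist M C ^ 2 := by
    rw [dist_eq_norm, dist_eq_norm]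
    have e1 : M - B = (M - O) + (O - B) := by abel
    have e2 : M - C = (M - O) + (O - C) := by abel
    rw [e1, e2, norm_add_sq_real, norm_add_sq_real]
    have hinner : (inner ℝ (M - O) (O - B) : ℝ) = (inner ℝ (M - O) (O - C) : ℝ) := by
      have hd : (inner ℝ (M - O) ((O - B) - (O - C)) : ℝ) = 0 := by
        have : (O - B) - (O - C) = C - B := by abel
        rw [this, h]
      rw [inner_sub_right] at hd
      linarith
    have hnorm : ‖O - B‖ = ‖O - C‖ := by
      rw [← dist_eq_norm, ← dist_eq_norm, dist_comm O B, dist_comm O C, hOBC]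
    rw [hinner, hnorm]
  have := congrArg Real.sqrt hsq
  simpa [Real.sqrt_sq dist_nonneg] using this

/-- Key oriented-angle chain: if `M` on the circle is equidistant from `B` and `C`,
then twice the oriented angle `∡ B A M` equals twice `∡ M A C`. -/
lemma two_zsmul_key {s : EuclideanGeometry.Sphere (EuclideanSpace ℝ (Fin 2))}
    {A B C M : EuclideanSpace ℝ (Fin 2)}
    (hA : A ∈ s) (hB : B ∈ s) (hC : C ∈ s) (hM : M ∈ s)
    (hd : dist M B = dist M C)
    (hAB : A ≠ B) (hAC : A ≠ C) (hMA : M ≠ A) (hMB : M ≠ B) (hMC : M ≠ C)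
    (hBC : B ≠ C) :
    (2 : ℤ) • ∡ B A M = (2 : ℤ) • ∡ M A C := by
  have h1 : (2 : ℤ) • ∡ B A M = (2 : ℤ) • ∡ B C M :=
    EuclideanGeometry.Sphere.two_zsmul_oangle_eq hB hA hC hM hAB hMA.symm hBC.symm hMC.symm
  have h2 : (2 : ℤ) • ∡ M B C = (2 : ℤ) • ∡ M A C :=
    EuclideanGeometry.Sphere.two_zsmul_oangle_eq hM hB hA hC hMB.symm hBC hMA.symm hAC
  have hp : ∡ M B C = ∡ B C M := EuclideanGeometry.oangle_eq_oangle_of_dist_eq hd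
  rw [h1, ← hp, h2]

/-- Arithmetic helper for the law-of-cosines cancellation. -/
lemma cos_cancel {dBA dMA dBM dMC x y : ℝ}
    (h1 : dBM * dBM = dBA * dBA + dMA * dMA - 2 * dBA * dMA * x)
    (h2 : dMC * dMC = dMA * dMA + dBA * dBA - 2 * dMA * dBA * y)
    (h3 : dMC * dMC = dBM * dBM) (hBA : 0 < dBA) (hMA : 0 < dMA) : x = y := by
  have h4 : 2 * dBA * dMA * x = 2 * dBA * dMA * y := by nlinarith [h1, h2, h3]
  have h5 : (2 * dBA * dMA) ≠ 0 := by positivity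
  exact mul_left_cancel₀ h5 h4

/-- **The perpendicular bisector of a side and the bisector of the opposite angle meet
on the circumcircle.**
Let `A`, `B`, `C` be non-collinear points on the circle with center `O` and radius `r`.
Then there is a point `M ≠ A` on this circle which is equidistant from `B` and `C`
(it lies on the perpendicular bisector of `BC`) and satisfies `∠ B A M = ∠ M A C`
(the ray `AM` bisects the angle at `A`). -/
theorem perp_bisector_angle_bisector_meet_on_circumcircle
    (A B C O : EuclideanSpace ℝ (Fin 2)) (r : ℝ)
    (hncol : ¬ Collinear ℝ ({A, B, C} : Set (EuclideanSpace ℝ (Fin 2))))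
    (hA : dist A O = r) (hB : dist B O = r) (hC : dist C O = r) :
    ∃ M : EuclideanSpace ℝ (Fin 2), dist M O = r ∧ M ≠ A ∧
      dist M B = dist M C ∧ ∠ B A M = ∠ M A C := by
  -- basic distinctness
  have hAB : A ≠ B := by
    rintro rfl
    exact hncol (by simpa using collinear_pair ℝ A C)
  have hAC : A ≠ C := by
    rintro rfl
    exact hncol (by simpa [Set.insert_comm, Set.pair_comm] using collinear_pair ℝ A B)
  have hBC : B ≠ C := by
    rintro rfl
    exact hncol (by simpa using collinear_pair ℝ A B)
  have hr : 0 < r := by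
    rcases lt_or_eq_of_le (hA ▸ dist_nonneg) with h | h
    · exact h
    · exfalso
      apply hAB
      have hA0 : A = O := by
        have : dist A O = 0 := by rw [hA, ← h]
        exact dist_eq_zero.mp this
      have hB0 : B = O := by
        have : dist B O = 0 := by rw [hB, ← h]
        exact dist_eq_zero.mp this
      rw [hA0, hB0]
  have hOBC : dist B O = dist C O := by rw [hB, hC]
  -- the sphere
  set s : EuclideanGeometry.Sphere (EuclideanSpace ℝ (Fin 2)) := ⟨O, r⟩ with hs
  have hAs : A ∈ s := hA
  have hBs : B ∈ s := hB
  have hCs : C ∈ s := hC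
  by_cases hsym : dist A B = dist A C
  · -- symmetric case : take the antipode of A
    set M : EuclideanSpace ℝ (Fin 2) := O + (O - A) with hM
    have hMO : dist M O = r := by
      rw [dist_eq_norm]
      have : M - O = O - A := by rw [hM]; abel
      rw [this, ← dist_eq_norm, dist_comm, hA]
    have hMA : M ≠ A := by
      intro h
      have h2 : (O - A) + (O - A) = 0 := by
        calc (O - A) + (O - A) = O + (O - A) - A := by abel
          _ = A - A := by rw [← hM, h]
          _ = 0 := sub_self A
      have h3 : (2 : ℝ) • (O - A) = 0 := by rw [two_smul]; exact h2
      have hOA : O - A = 0 := by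
        rcases smul_eq_zero.mp h3 with h4 | h4
        · norm_num at h4
        · exact h4
      have : A = O := (sub_eq_zero.mp hOA).symm
      rw [this] at hA; simp at hA; linarith
    have hMBC : dist M B = dist M C := by
      apply equidist_aux O B C _ _ hOBC
      have h1 : (inner ℝ (O - A) (C - B) : ℝ) = 0 := by
        have := EuclideanGeometry.inner_vsub_vsub_of_dist_eq_of_dist_eq
          (c₁ := A) (c₂ := O) (p₁ := B) (p₂ := C)
          (by rw [dist_comm B A, dist_comm C A]; exact hsym) hOBC
        simpa using this
      have : M - O = O - A := by rw [hM]; abel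
      rw [this]; exact h1
    refine ⟨M, hMO, hMA, hMBC, ?_⟩
    -- angle equality via law of cosines
    have l1 := EuclideanGeometry.law_cos B A M
    have l2 := EuclideanGeometry.law_cos M A C
    have hBA : dist B A = dist C A := by
      rw [dist_comm B A, dist_comm C A]; exact hsym
    have hBM : dist B M = dist M C := by rw [dist_comm B M]; exact hMBC
    have hMApos : 0 < dist M A := dist_pos.mpr hMA
    have hBApos : 0 < dist B A := dist_pos.mpr (fun h => hAB h.symm)
    have hcos : Real.cos (∠ B A M) = Real.cos (∠ M A C) := by
      have hMC' : dist M C * dist M C = dist B M * dist B M := by rw [hBM]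
      have hCA' : dist C A = dist B A := hBA.symm
      rw [hCA'] at l2
      exact cos_cancel l1 l2 hMC' hBApos hMApos
    calc ∠ B A M = Real.arccos (Real.cos (∠ B A M)) :=
          (Real.arccos_cos (EuclideanGeometry.angle_nonneg _ _ _)
            (EuclideanGeometry.angle_le_pi _ _ _)).symm
      _ = Real.arccos (Real.cos (∠ M A C)) := by rw [hcos]
      _ = ∠ M A C := Real.arccos_cos (EuclideanGeometry.angle_nonneg _ _ _)
            (EuclideanGeometry.angle_le_pi _ _ _)
  · -- general case : the two intersections of the perpendicular bisector with the circle
    set v : EuclideanSpace ℝ (Fin 2) := C - B with hv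
    have hvne : v ≠ 0 := sub_ne_zero.mpr hBC.symm
    set u : EuclideanSpace ℝ (Fin 2) := !₂[-(v 1), v 0] with hu
    have huv : (inner ℝ (u) (v) : ℝ) = 0 := by
      rw [PiLp.inner_apply]
      rw [Fin.sum_univ_two]
      show v 0 * u 0 + v 1 * u 1 = 0
      rw [hu]
      simp [Matrix.cons_val_zero, Matrix.cons_val_one]
      ring
    have hune : u ≠ 0 := by
      intro h
      apply hvne
      ext i
      have h0 : u 0 = 0 := by rw [h]; rfl
      have h1 : u 1 = 0 := by rw [h]; rfl
      rw [hu] at h0 h1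
      simp at h0 h1
      fin_cases i
      · simpa using h1
      · simpa using h0
    have hunorm : 0 < ‖u‖ := norm_pos_iff.mpr hune
    set w : EuclideanSpace ℝ (Fin 2) := (r / ‖u‖) • u with hw
    have hwnorm : ‖w‖ = r := by
      rw [hw, norm_smul, Real.norm_eq_abs, abs_of_pos (by positivity)]
      field_simp
    have hwne : w ≠ 0 := by
      intro h
      rw [h, norm_zero] at hwnorm
      linarith
    have hwv : (inner ℝ (w) (v) : ℝ) = 0 := by
      rw [hw, inner_smul_left]
      simp [huv]
    set Mp : EuclideanSpace ℝ (Fin 2) := O + w with hMp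
    set Mm : EuclideanSpace ℝ (Fin 2) := O - w with hMm
    have hMpO : dist Mp O = r := by
      rw [dist_eq_norm]
      have : Mp - O = w := by rw [hMp]; abel
      rw [this, hwnorm]
    have hMmO : dist Mm O = r := by
      rw [dist_eq_norm]
      have : Mm - O = -w := by rw [hMm]; abel
      rw [this, norm_neg, hwnorm]
    have hMpBC : dist Mp B = dist Mp C := by
      apply equidist_aux O B C _ _ hOBC
      have : Mp - O = w := by rw [hMp]; abel
      rw [this, hv] at *
      exact hwv
    have hMmBC : dist Mm B = dist Mm C := by
      apply equidist_aux O B C _ _ hOBC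
      have : Mm - O = -w := by rw [hMm]; abel
      rw [this, inner_neg_left, hwv, neg_zero]
    -- distinctness facts
    have hne_of_eq : ∀ M : EuclideanSpace ℝ (Fin 2), dist M B = dist M C → M ≠ A ∧ M ≠ B ∧ M ≠ C := by
      intro M hMBC
      refine ⟨?_, ?_, ?_⟩
      · rintro rfl; exact hsym hMBC
      · rintro rfl; exact hBC (dist_eq_zero.mp (by rw [dist_self] at hMBC; exact hMBC.symm))
      · rintro rfl; exact hBC (dist_eq_zero.mp (by rw [dist_self] at hMBC; rw [dist_comm] at hMBC; exact hMBC))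
    obtain ⟨hMpA, hMpB, hMpC⟩ := hne_of_eq Mp hMpBC
    obtain ⟨hMmA, hMmB, hMmC⟩ := hne_of_eq Mm hMmBC
    have hMps : Mp ∈ s := hMpO
    have hMms : Mm ∈ s := hMmO
    have hMpMm : Mp ≠ Mm := by
      intro h
      apply hwne
      have h2 : w + w = 0 := by
        have h3 : O + w = O - w := h
        calc w + w = (O + w) - (O - w) := by abel
          _ = 0 := by rw [h3]; abel
      have h3 : (2 : ℝ) • w = 0 := by rw [two_smul]; exact h2
      rcases smul_eq_zero.mp h3 with h4 | h4
      · norm_num at h4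
      · exact h4
    -- O is the midpoint of Mp and Mm
    have hmid : midpoint ℝ Mp Mm = O := by
      have h1 : midpoint ℝ Mp Mm + midpoint ℝ Mp Mm = Mp + Mm := midpoint_add_self ℝ Mp Mm
      have h2 : Mp + Mm = O + O := by rw [hMp, hMm]; abel
      have h3 : (2 : ℝ) • midpoint ℝ Mp Mm = (2 : ℝ) • O := by
        rw [two_smul, two_smul, h1, h2]
      exact smul_right_injective (EuclideanSpace ℝ (Fin 2)) two_ne_zero h3
    have hsbtw : Sbtw ℝ Mp O Mm := by
      rw [← hmid]
      exact sbtw_midpoint_of_ne ℝ hMpMm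
    have hcenterpi : ∡ Mp O Mm = (Real.pi : Real.Angle) := hsbtw.oangle₁₂₃_eq_pi
    have hcent : ∡ Mp O Mm = (2 : ℤ) • ∡ Mp A Mm := by
      have := EuclideanGeometry.Sphere.oangle_center_eq_two_zsmul_oangle
        (s := s) hMps hAs hMms hMpA.symm hMmA.symm
      exact this
    have h2AM : (2 : ℤ) • ∡ Mp A Mm = (Real.pi : Real.Angle) := by rw [← hcent, hcenterpi]
    -- the two candidate angle defects
    set θp : Real.Angle := ∡ Mp A C - ∡ B A Mp with hθp
    set θm : Real.Angle := ∡ Mm A C - ∡ B A Mm with hθm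
    have kp : (2 : ℤ) • θp = 0 := by
      rw [hθp, smul_sub,
        two_zsmul_key hAs hBs hCs hMps hMpBC hAB hAC hMpA hMpB hMpC hBC, sub_self]
    have km : (2 : ℤ) • θm = 0 := by
      rw [hθm, smul_sub,
        two_zsmul_key hAs hBs hCs hMms hMmBC hAB hAC hMmA hMmB hMmC hBC, sub_self]
    have d1 : ∡ Mp A Mm + ∡ Mm A C = ∡ Mp A C :=
      EuclideanGeometry.oangle_add hMpA hMmA (fun h => hAC h.symm)
    have d2 : ∡ B A Mp + ∡ Mp A Mm = ∡ B A Mm :=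
      EuclideanGeometry.oangle_add (fun h => hAB h.symm) hMpA hMmA
    have hdiff : θp - θm = (Real.pi : Real.Angle) := by
      have : θp - θm = ∡ Mp A Mm + ∡ Mp A Mm := by
        rw [hθp, hθm, ← d1, ← d2]
        abel
      rw [this, ← two_zsmul]
      exact h2AM
    -- select the right candidate
    have final : ∀ M : EuclideanSpace ℝ (Fin 2), M ∈ s → M ≠ A →
        dist M B = dist M C → ∡ M A C = ∡ B A M →
        ∃ M' : EuclideanSpace ℝ (Fin 2), dist M' O = r ∧ M' ≠ A ∧
          dist M' B = dist M' C ∧ ∠ B A M' = ∠ M' A C := by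
      intro M hMs hMA hMBC hor
      refine ⟨M, hMs, hMA, hMBC, ?_⟩
      rw [EuclideanGeometry.angle_eq_abs_oangle_toReal (fun h => hAB h.symm) hMA,
        EuclideanGeometry.angle_eq_abs_oangle_toReal hMA (fun h => hAC h.symm), ← hor]
    rcases Real.Angle.two_zsmul_eq_zero_iff.mp kp with h0 | hpi
    · exact final Mp hMps hMpA hMpBC (sub_eq_zero.mp h0)
    · have hm0 : θm = 0 := by
        have : θm = θp - (Real.pi : Real.Angle) := by
          rw [← hdiff]; abel
        rw [this, hpi, sub_self]
      exact final Mm hMms hMmA hMmBC (sub_eq_zero.mp hm0)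
end

section
/- Let P₁, P₂, P₃, P₄, P₅ be five distinct points of ℝ² such that no three of them are collinear. Then there exists a nonzero real polynomial p(x, y) of total degree at most 2 vanishing at all five points, and p is unique up to a nonzero scalar: if q(x, y) is any nonzero real polynomial of total degree at most 2 vanishing at all five points, then q = λ·p for some nonzero real number λ. That is, five points in general position determine a unique conic. -/
open MvPolynomial Module

noncomputable section FivePoints

/-- exponent vector `(a, b)` as a `Finsupp`. -/
def expv (a b : ℕ) : Fin 2 →₀ ℕ := Finsupp.single 0 a + Finsupp.single 1 b

lemma expv_apply0 (a b : ℕ) : expv a b 0 = a := by simp [expv]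
lemma expv_apply1 (a b : ℕ) : expv a b 1 = b := by simp [expv]

lemma eq_expv (m : Fin 2 →₀ ℕ) : m = expv (m 0) (m 1) := by
  ext j
  fin_cases j
  · simp [expv_apply0]
  · simp [expv_apply1]

/-- components of the six exponent vectors of degree at most 2 -/
def da : Fin 6 → ℕ := ![0, 1, 0, 2, 1, 0]
def db : Fin 6 → ℕ := ![0, 0, 1, 0, 1, 2]

def dvec (k : Fin 6) : Fin 2 →₀ ℕ := expv (da k) (db k)

lemma dvec_apply0 (k : Fin 6) : dvec k 0 = da k := expv_apply0 _ _
lemma dvec_apply1 (k : Fin 6) : dvec k 1 = db k := expv_apply1 _ _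

lemma dvec_inj : Function.Injective dvec := by
  intro i k h
  have h0 : da i = da k := by
    have := DFunLike.congr_fun h (0 : Fin 2)
    rwa [dvec_apply0, dvec_apply0] at this
  have h1 : db i = db k := by
    have := DFunLike.congr_fun h (1 : Fin 2)
    rwa [dvec_apply1, dvec_apply1] at this
  exact (by decide : ∀ i k : Fin 6, da i = da k → db i = db k → i = k) i k h0 h1

lemma exists_dvec (a b : ℕ) (h : a + b ≤ 2) : ∃ k, dvec k = expv a b := by
  have ha : a ≤ 2 := le_trans (Nat.le_add_right _ _) h
  interval_cases a <;>
    (have hb : b ≤ 2 := by omega) <;>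
    interval_cases b <;>
    first
      | exact ⟨0, rfl⟩
      | exact ⟨1, rfl⟩
      | exact ⟨2, rfl⟩
      | exact ⟨3, rfl⟩
      | exact ⟨4, rfl⟩
      | exact ⟨5, rfl⟩
      | exact absurd h (by omega)

lemma sum_eq_two_apply (m : Fin 2 →₀ ℕ) : (m.sum fun _ n => n) = m 0 + m 1 := by
  rw [Finsupp.sum_fintype _ _ (fun _ => rfl), Fin.sum_univ_two]

lemma dvec_sum_le (k : Fin 6) : ((dvec k).sum fun _ n => n) ≤ 2 := by
  rw [sum_eq_two_apply, dvec_apply0, dvec_apply1]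
  exact (by decide : ∀ k : Fin 6, da k + db k ≤ 2) k

/-- the linear map sending coefficients to the corresponding polynomial -/
def phiMap : (Fin 6 → ℝ) →ₗ[ℝ] MvPolynomial (Fin 2) ℝ :=
  ∑ k : Fin 6, (LinearMap.proj k).smulRight (monomial (dvec k) 1)

lemma phiMap_apply (c : Fin 6 → ℝ) :
    phiMap c = ∑ k : Fin 6, c k • monomial (dvec k) (1 : ℝ) := by
  simp [phiMap]

lemma coeff_phiMap (c : Fin 6 → ℝ) (k : Fin 6) :
    coeff (dvec k) (phiMap c) = c k := by
  rw [phiMap_apply, coeff_sum]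
  rw [Finset.sum_eq_single k]
  · simp [coeff_monomial]
  · intro j _ hj
    simp [coeff_smul, coeff_monomial, dvec_inj.ne hj]
  · simp

lemma phiMap_totalDegree (c : Fin 6 → ℝ) : (phiMap c).totalDegree ≤ 2 := by
  rw [phiMap_apply]
  refine le_trans (totalDegree_finset_sum _ _) (Finset.sup_le fun k _ => ?_)
  refine le_trans (totalDegree_smul_le _ _) ?_
  refine le_trans (le_of_eq (totalDegree_monomial _ one_ne_zero)) ?_
  exact dvec_sum_le k

lemma phiMap_coeffs (q : MvPolynomial (Fin 2) ℝ) (hq : q.totalDegree ≤ 2) :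
    phiMap (fun k => coeff (dvec k) q) = q := by
  apply MvPolynomial.ext
  intro m
  by_cases hm : ∃ k, dvec k = m
  · obtain ⟨k, rfl⟩ := hm
    rw [coeff_phiMap]
  · have hz : coeff m q = 0 := by
      by_contra hc
      have hmem : m ∈ q.support := MvPolynomial.mem_support_iff.mpr hc
      have hle := le_trans (le_totalDegree hmem) hq
      rw [sum_eq_two_apply] at hle
      obtain ⟨k, hk⟩ := exists_dvec (m 0) (m 1) hle
      exact hm ⟨k, by rw [hk, ← eq_expv]⟩
    rw [hz, phiMap_apply, coeff_sum, Finset.sum_eq_zero]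
    intro k _
    simp [coeff_smul, coeff_monomial, show dvec k ≠ m from fun h => hm ⟨k, h⟩]

lemma phiMap_inj : Function.Injective phiMap := by
  intro c c' h
  funext k
  have := congrArg (coeff (dvec k)) h
  rwa [coeff_phiMap, coeff_phiMap] at this

/-- evaluation at the five points, as a linear map on coefficient vectors -/
def evalMap (A : Fin 5 → Fin 2 → ℝ) : (Fin 6 → ℝ) →ₗ[ℝ] (Fin 5 → ℝ) :=
  LinearMap.pi fun i => (MvPolynomial.aeval (A i)).toLinearMap ∘ₗ phiMap

lemma evalMap_apply (A : Fin 5 → Fin 2 → ℝ) (c : Fin 6 → ℝ) (i : Fin 5) :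
    evalMap A c i = MvPolynomial.eval (A i) (phiMap c) := by
  show (MvPolynomial.aeval (A i)) (phiMap c) = _
  rw [← coe_aeval_eq_eval]
  rfl

/-- the affine line through `p` and `q`, as a polynomial -/
def lineP (p q : Fin 2 → ℝ) : MvPolynomial (Fin 2) ℝ :=
  C (q 1 - p 1) * (X 0 - C (p 0)) - C (q 0 - p 0) * (X 1 - C (p 1))

lemma eval_lineP (p q r : Fin 2 → ℝ) :
    MvPolynomial.eval r (lineP p q)
      = (q 1 - p 1) * (r 0 - p 0) - (q 0 - p 0) * (r 1 - p 1) := by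
  simp [lineP]

lemma eval_lineP_left (p q : Fin 2 → ℝ) : MvPolynomial.eval p (lineP p q) = 0 := by
  rw [eval_lineP]; ring

lemma eval_lineP_right (p q : Fin 2 → ℝ) : MvPolynomial.eval q (lineP p q) = 0 := by
  rw [eval_lineP]; ring

lemma lineP_totalDegree (p q : Fin 2 → ℝ) : (lineP p q).totalDegree ≤ 1 := by
  have hx : ∀ (i : Fin 2) (a : ℝ), (X i - C a : MvPolynomial (Fin 2) ℝ).totalDegree ≤ 1 :=
    fun i a => le_trans (totalDegree_sub _ _)
      (max_le (le_of_eq (totalDegree_X i)) (by simp))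
  have h1 : ∀ (a : ℝ) (i : Fin 2) (b : ℝ),
      (C a * (X i - C b) : MvPolynomial (Fin 2) ℝ).totalDegree ≤ 1 := by
    intro a i b
    refine le_trans (totalDegree_mul _ _) ?_
    simpa [totalDegree_C] using hx i b
  exact le_trans (totalDegree_sub _ _) (max_le (h1 _ _ _) (h1 _ _ _))

lemma collinear_of_det (p q r : Fin 2 → ℝ) (hpq : p ≠ q)
    (h : (q 1 - p 1) * (r 0 - p 0) - (q 0 - p 0) * (r 1 - p 1) = 0) :
    Collinear ℝ ({p, q, r} : Set (Fin 2 → ℝ)) := by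
  rw [collinear_iff_of_mem (Set.mem_insert p _)]
  refine ⟨q - p, ?_⟩
  intro x hx
  rcases hx with rfl | rfl | rfl
  · exact ⟨0, by simp⟩
  · exact ⟨1, by funext j; simp⟩
  · by_cases h0 : q 0 - p 0 = 0
    · have h1 : q 1 - p 1 ≠ 0 := by
        intro h1
        apply hpq
        funext j
        fin_cases j
        · show p 0 = q 0; linarith
        · show p 1 = q 1; linarith
      refine ⟨(x 1 - p 1) / (q 1 - p 1), ?_⟩
      funext j
      fin_cases j <;> simp only [Pi.add_apply, Pi.smul_apply, Pi.sub_apply, smul_eq_mul]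
      · show x 0 = _ * (q 0 - p 0) + p 0
        rw [h0] at h ⊢
        have : (q 1 - p 1) * (x 0 - p 0) = 0 := by linarith
        have := (mul_eq_zero.mp this).resolve_left h1
        linarith [this]
      · show x 1 = (x 1 - p 1) / (q 1 - p 1) * (q 1 - p 1) + p 1
        field_simp
        ring
    · refine ⟨(x 0 - p 0) / (q 0 - p 0), ?_⟩
      funext j
      fin_cases j <;> simp only [Pi.add_apply, Pi.smul_apply, Pi.sub_apply, smul_eq_mul]
      · show x 0 = (x 0 - p 0) / (q 0 - p 0) * (q 0 - p 0) + p 0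
        field_simp
        ring
      · show x 1 = (x 0 - p 0) / (q 0 - p 0) * (q 1 - p 1) + p 1
        have : (q 0 - p 0) * (x 1 - p 1) = (q 1 - p 1) * (x 0 - p 0) := by linarith
        field_simp
        nlinarith [this]

lemma exists_indicator (A : Fin 5 → (Fin 2 → ℝ)) (hinj : Function.Injective A)
    (hncol : ∀ i j k : Fin 5, i ≠ j → i ≠ k → j ≠ k → ¬ Collinear ℝ {A i, A j, A k})
    (i j1 j2 j3 j4 : Fin 5)
    (hi1 : i ≠ j1) (hi2 : i ≠ j2) (hi3 : i ≠ j3) (hi4 : i ≠ j4)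
    (h12 : j1 ≠ j2) (h34 : j3 ≠ j4)
    (hcov : ∀ j : Fin 5, j = i ∨ j = j1 ∨ j = j2 ∨ j = j3 ∨ j = j4) :
    ∃ g : MvPolynomial (Fin 2) ℝ, g.totalDegree ≤ 2 ∧
      MvPolynomial.eval (A i) g = 1 ∧ ∀ j, j ≠ i → MvPolynomial.eval (A j) g = 0 := by
  have key : ∀ a b : Fin 5, a ≠ b → i ≠ a → i ≠ b →
      MvPolynomial.eval (A i) (lineP (A a) (A b)) ≠ 0 := by
    intro a b hab hia hib hz
    apply hncol i a b hia hib hab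
    rw [eval_lineP] at hz
    have hc := collinear_of_det (A a) (A b) (A i) (hinj.ne hab) hz
    have hset : ({A a, A b, A i} : Set (Fin 2 → ℝ)) = {A i, A a, A b} := by
      ext x
      simp only [Set.mem_insert_iff, Set.mem_singleton_iff]
      tauto
    rwa [hset] at hc
  have hv1 := key j1 j2 h12 hi1 hi2
  have hv2 := key j3 j4 h34 hi3 hi4
  set v := MvPolynomial.eval (A i) (lineP (A j1) (A j2) * lineP (A j3) (A j4)) with hv_def
  have hv : v ≠ 0 := by
    rw [hv_def, map_mul]
    exact mul_ne_zero hv1 hv2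
  refine ⟨C v⁻¹ * (lineP (A j1) (A j2) * lineP (A j3) (A j4)), ?_, ?_, ?_⟩
  · refine le_trans (totalDegree_mul _ _) ?_
    have h2 := le_trans (totalDegree_mul (lineP (A j1) (A j2)) (lineP (A j3) (A j4)))
      (add_le_add (lineP_totalDegree _ _) (lineP_totalDegree _ _))
    simpa [totalDegree_C] using h2
  · rw [map_mul, eval_C, ← hv_def]
    exact inv_mul_cancel₀ hv
  · intro j hj
    rcases hcov j with rfl | rfl | rfl | rfl | rfl
    · exact absurd rfl hj
    · simp [eval_lineP_left]
    · simp [eval_lineP_right]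
    · simp [eval_lineP_left]
    · simp [eval_lineP_right]

end FivePoints

/-- **Five points in general position determine a unique conic.**
Let `A 0, …, A 4` be five distinct points of the plane, no three collinear.  Then
there is a nonzero real polynomial `p` of total degree at most `2` in two variables
vanishing at all five points, and it is unique up to a nonzero scalar: any nonzero
polynomial `q` of total degree at most `2` vanishing at the five points equals
`l • p` for some nonzero real `l`. -/
theorem five_points_determine_unique_conic
    (A : Fin 5 → (Fin 2 → ℝ)) (hinj : Function.Injective A)
    (hncol : ∀ i j k : Fin 5, i ≠ j → i ≠ k → j ≠ k → ¬ Collinear ℝ {A i, A j, A k}) :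
    ∃ p : MvPolynomial (Fin 2) ℝ, p ≠ 0 ∧ p.totalDegree ≤ 2 ∧
      (∀ i, MvPolynomial.eval (A i) p = 0) ∧
      ∀ q : MvPolynomial (Fin 2) ℝ, q ≠ 0 → q.totalDegree ≤ 2 →
        (∀ i, MvPolynomial.eval (A i) q = 0) → ∃ l : ℝ, l ≠ 0 ∧ q = l • p := by
  classical
  have hind : ∀ i : Fin 5, ∃ g : MvPolynomial (Fin 2) ℝ, g.totalDegree ≤ 2 ∧
      MvPolynomial.eval (A i) g = 1 ∧ ∀ j, j ≠ i → MvPolynomial.eval (A j) g = 0 := by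
    intro i
    fin_cases i
    · exact exists_indicator A hinj hncol 0 1 2 3 4 (by decide) (by decide) (by decide)
        (by decide) (by decide) (by decide) (by decide)
    · exact exists_indicator A hinj hncol 1 0 2 3 4 (by decide) (by decide) (by decide)
        (by decide) (by decide) (by decide) (by decide)
    · exact exists_indicator A hinj hncol 2 0 1 3 4 (by decide) (by decide) (by decide)
        (by decide) (by decide) (by decide) (by decide)
    · exact exists_indicator A hinj hncol 3 0 1 2 4 (by decide) (by decide) (by decide)
        (by decide) (by decide) (by decide) (by decide)
    · exact exists_indicator A hinj hncol 4 0 1 2 3 (by decide) (by decide) (by decide)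
        (by decide) (by decide) (by decide) (by decide)
  set M := evalMap A with hM
  have hsurj : Function.Surjective M := by
    rw [← LinearMap.range_eq_top, ← top_le_iff, ← (Pi.basisFun ℝ (Fin 5)).span_eq,
      Submodule.span_le]
    rintro _ ⟨i, rfl⟩
    obtain ⟨g, hg2, hgi, hg0⟩ := hind i
    refine ⟨fun k => MvPolynomial.coeff (dvec k) g, ?_⟩
    funext j
    rw [hM, evalMap_apply, phiMap_coeffs g hg2]
    by_cases hji : j = i
    · subst hji
      simp [Pi.basisFun_apply, hgi]
    · simp [Pi.basisFun_apply, hg0 j hji, Pi.single_eq_of_ne hji]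
  have hrank : Module.finrank ℝ (LinearMap.ker M) = 1 := by
    have h := LinearMap.finrank_range_add_finrank_ker M
    rw [LinearMap.range_eq_top.mpr hsurj, finrank_top] at h
    simp only [Module.finrank_fin_fun] at h
    omega
  have hker : LinearMap.ker M ≠ ⊥ := by
    intro hbot
    rw [hbot, finrank_bot] at hrank
    exact absurd hrank (by norm_num)
  obtain ⟨c, hc_mem, hc0⟩ := Submodule.exists_mem_ne_zero_of_ne_bot hker
  refine ⟨phiMap c, ?_, phiMap_totalDegree c, ?_, ?_⟩
  · intro h
    exact hc0 (phiMap_inj (by rw [h, map_zero]))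
  · intro i
    have h := congrFun (LinearMap.mem_ker.mp hc_mem) i
    rw [hM, evalMap_apply] at h
    simpa using h
  · intro q hq0 hq2 hqv
    set c' : Fin 6 → ℝ := fun k => MvPolynomial.coeff (dvec k) q with hc'
    have hqc' : phiMap c' = q := phiMap_coeffs q hq2
    have hc'_mem : c' ∈ LinearMap.ker M := by
      rw [LinearMap.mem_ker]
      funext i
      rw [hM, evalMap_apply, hqc']
      simpa using hqv i
    have hc'0 : c' ≠ 0 := by
      intro h
      apply hq0
      rw [← hqc', h, map_zero]
    have hone := (finrank_eq_one_iff_of_nonzero' (⟨c, hc_mem⟩ : LinearMap.ker M)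
      (by simpa [Submodule.mk_eq_zero] using hc0)).mp hrank
    obtain ⟨l, hl⟩ := hone ⟨c', hc'_mem⟩
    have hlc : l • c = c' := congrArg Subtype.val hl
    have hl0 : l ≠ 0 := by
      intro h
      apply hc'0
      rw [← hlc, h, zero_smul]
    exact ⟨l, hl0, by rw [← hqc', ← hlc, map_smul]⟩
end
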